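/- Let A: Θ → R^{n×n} be affine in θ, B ∈ R^{n×m}, let Θ = conv{θ̄^1,...,θ̄^q} be a polytope, and let X = conv{x̄^1,...,x̄^t}, Y ⊆ R^n with Y convex. Suppose for every j ∈ {1,...,t} and l ∈ {1,...,q} there are controls u^{(j,l)} ∈ U (U convex) with A(θ̄^l)x̄^j + B u^{(j,l)} ∈ Y. Define the vertex-control law Π(x,θ) = Σ_j ζ_j Σ_l η_l u^{(j,l)} where ζ, η are convex multipliers expressing x = Σ_j ζ_j x̄^j and θ = Σ_l η_l θ̄^l. Then for all x ∈ X and θ ∈ Θ, Π(x,θ) ∈ U and A(θ)x + B Π(x,θ) ∈ Y. -/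

import Mathlib

open Finset

lemma sum_mulVec' {n n' : ℕ} {ι : Type*} (s : Finset ι)
    (f : ι → Matrix (Fin n) (Fin n') ℝ) (v : Fin n' → ℝ) :
    (∑ l ∈ s, f l).mulVec v = ∑ l ∈ s, (f l).mulVec v := by
  classical
  induction s using Finset.induction with
  | empty => simp [Matrix.mulVec]
  | @insert a s h ih => simp [Finset.sum_insert h, Matrix.add_mulVec, ih]

lemma mulVec_sum' {n n' : ℕ} {ι : Type*} (s : Finset ι)
    (M : Matrix (Fin n) (Fin n') ℝ) (f : ι → Fin n' → ℝ) :
    M.mulVec (∑ l ∈ s, f l) = ∑ l ∈ s, M.mulVec (f l) := by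
  classical
  induction s using Finset.induction with
  | empty => simp [Matrix.mulVec]
  | @insert a s h ih => simp [Finset.sum_insert h, Matrix.mulVec_add, ih]

theorem vertex_controller_sufficiency {n m nθ t q : ℕ}
    (A0 : Matrix (Fin n) (Fin n) ℝ) (Ai : Fin nθ → Matrix (Fin n) (Fin n) ℝ)
    (A : (Fin nθ → ℝ) → Matrix (Fin n) (Fin n) ℝ)
    (hA : ∀ θ, A θ = A0 + ∑ i, θ i • Ai i)
    (B : Matrix (Fin n) (Fin m) ℝ)
    (U : Set (Fin m → ℝ)) (hU : Convex ℝ U)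
    (Y : Set (Fin n → ℝ)) (hY : Convex ℝ Y)
    (θv : Fin (q + 1) → (Fin nθ → ℝ)) (xv : Fin (t + 1) → (Fin n → ℝ))
    (u : Fin (t + 1) → Fin (q + 1) → (Fin m → ℝ))
    (huU : ∀ j l, u j l ∈ U)
    (huY : ∀ j l, (A (θv l)).mulVec (xv j) + B.mulVec (u j l) ∈ Y)
    (ζ : Fin (t + 1) → ℝ) (η : Fin (q + 1) → ℝ)
    (hζ : ∀ j, 0 ≤ ζ j) (hη : ∀ l, 0 ≤ η l)
    (hζ1 : ∑ j, ζ j = 1) (hη1 : ∑ l, η l = 1) :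
    (∑ j, ζ j • ∑ l, η l • u j l) ∈ U ∧
    (A (∑ l, η l • θv l)).mulVec (∑ j, ζ j • xv j) +
        B.mulVec (∑ j, ζ j • ∑ l, η l • u j l) ∈ Y := by
  -- A of convex combination is convex combination of matrices
  have hAcc : A (∑ l, η l • θv l) = ∑ l, η l • A (θv l) := by
    rw [hA]
    have : ∀ l : Fin (q + 1), η l • A (θv l) = η l • A0 + ∑ i, (η l * θv l i) • Ai i := by
      intro l
      rw [hA, smul_add, Finset.smul_sum]
      simp [smul_smul]
    simp only [this]
    rw [Finset.sum_add_distrib, ← Finset.sum_smul, hη1, one_smul,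
      Finset.sum_comm]
    congr 1
    refine Finset.sum_congr rfl fun i _ => ?_
    rw [← Finset.sum_smul]
    congr 1
    simp [Finset.sum_apply, Pi.smul_apply]
  constructor
  · exact hU.sum_mem (fun j _ => hζ j) hζ1 (fun j _ =>
      hU.sum_mem (fun l _ => hη l) hη1 (fun l _ => huU j l))
  · have key : (A (∑ l, η l • θv l)).mulVec (∑ j, ζ j • xv j) +
        B.mulVec (∑ j, ζ j • ∑ l, η l • u j l)
        = ∑ j, ζ j • ∑ l, η l • ((A (θv l)).mulVec (xv j) + B.mulVec (u j l)) := by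
      rw [hAcc, sum_mulVec', mulVec_sum']
      simp only [Matrix.smul_mulVec, mulVec_sum', Matrix.mulVec_smul,
        smul_add, Finset.smul_sum, Finset.sum_add_distrib]
      congr 1
      rw [Finset.sum_comm]
      exact Finset.sum_congr rfl fun j _ => Finset.sum_congr rfl fun l _ =>
        smul_comm _ _ _
    rw [key]
    exact hY.sum_mem (fun j _ => hζ j) hζ1 (fun j _ =>
      hY.sum_mem (fun l _ => hη l) hη1 (fun l _ => huY j l))
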